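/- Let r be a W-valued 1-form on ℝ^{2n}, D = −δ + d + (i/ℏ)[r,·], and let ũ be a W-valued 0-form with Dũ = 0. Set ρ(ũ) = (ℏ/i)·∂ũ/∂ℏ + Eũ and K_0 = −( Er − iℏ·∂r/∂ℏ + i r + (i/2) Σ_{i,j} ω_{ij} y^i dx^j ). Then D(ρ(ũ)) = (i/ℏ)[K_0, ũ]. -/

import Mathlib

/-!  Common definitions: formal Weyl algebras, Moyal products, Weyl-bundle valued
differential forms on ℝ^{2n}, Fedosov connections, star-products on smooth functions,
multidifferential operators and Hochschild coboundaries.  -/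

noncomputable section
namespace StarPaper

open scoped BigOperators

/-! ### Formal power series in y -/

/-- The fiber coefficient ring `ℂ[[y^1, …, y^N]]`. -/
abbrev Wc (N : ℕ) := MvPowerSeries (Fin N) ℂ

/-- Build a formal power series from its coefficient function. -/
def Wc.mk {N : ℕ} (f : (Fin N →₀ ℕ) → ℂ) : Wc N := f

/-- Formal partial derivative `∂/∂y^i` on `ℂ[[y]]`. -/
def yD {N : ℕ} (i : Fin N) (a : Wc N) : Wc N :=
  Wc.mk fun β => ((β i : ℂ) + 1) * MvPowerSeries.coeff (R := ℂ) (β + Finsupp.single i 1) a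

/-- Formal iterated partial derivative `∂^α` on `ℂ[[y]]`. -/
def yDM {N : ℕ} (α : Fin N →₀ ℕ) (a : Wc N) : Wc N :=
  Wc.mk fun β =>
    (∏ i : Fin N, (((β i + α i).factorial : ℂ) / ((β i).factorial : ℂ))) *
      MvPowerSeries.coeff (R := ℂ) (β + α) a

/-- Iterated derivatives along a tuple of directions. -/
def iterD {R : Type*} {N : ℕ} (D : Fin N → R → R) : {k : ℕ} → (Fin k → Fin N) → R → R
  | 0, _, a => a
  | _ + 1, v, a => D (v 0) (iterD D (fun t => v t.succ) a)

/-- The `k`-th term of the Moyal–Weyl product for a constant matrix `π`: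
`((-iℏ/2)^k/k!) Σ π^{i₁j₁}⋯π^{i_kj_k} (∂^k a/∂y^{i₁}⋯) (∂^k b/∂y^{j₁}⋯)`. -/
def moyalTerm {R : Type*} [CommRing R] [Module ℂ R] {N : ℕ}
    (D : Fin N → R → R) (π : Matrix (Fin N) (Fin N) ℂ) (k : ℕ) (a b : R) : R :=
  ((-Complex.I / 2) ^ k / (Nat.factorial k : ℂ)) •
    ∑ i : Fin k → Fin N, ∑ j : Fin k → Fin N,
      (∏ t, π (i t) (j t)) • (iterD D i a * iterD D j b)

/-- Moyal product on formal power series `Σ_m ℏ^m F_m` (coefficients `F : ℕ → R`). -/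
def moyalN {R : Type*} [CommRing R] [Module ℂ R] {N : ℕ} (D : Fin N → R → R)
    (π : Matrix (Fin N) (Fin N) ℂ) (F G : ℕ → R) : ℕ → R :=
  fun m => ∑ k ∈ Finset.range (m + 1), ∑ l ∈ Finset.range (m - k + 1),
    moyalTerm D π k (F l) (G (m - k - l))

/-- Moyal product on formal Laurent series `Σ_m ℏ^m F_m` (coefficients `F : ℤ → R`);
the sum over contributions is finite for series bounded below in `ℏ`-degree. -/
def moyalZ {R : Type*} [CommRing R] [Module ℂ R] {N : ℕ} (D : Fin N → R → R)
    (π : Matrix (Fin N) (Fin N) ℂ) (F G : ℤ → R) : ℤ → R :=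
  fun m => ∑ᶠ p : ℕ × ℤ, moyalTerm D π p.1 (F p.2) (G (m - p.1 - p.2))

/-- Moyal term for an `ℏ`-dependent matrix `π(ℏ) = π₀ + ℏπ₁`: the part of the `k`-th
Moyal term in which the product of matrix entries contributes `ℏ^d`. -/
def moyalTermH {R : Type*} [CommRing R] [Module ℂ R] {N : ℕ} (D : Fin N → R → R)
    (π0 π1 : Matrix (Fin N) (Fin N) ℂ) (k d : ℕ) (a b : R) : R :=
  ((-Complex.I / 2) ^ k / (Nat.factorial k : ℂ)) •
    ∑ i : Fin k → Fin N, ∑ j : Fin k → Fin N,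
      (∑ T ∈ Finset.univ.powerset.filter (fun T : Finset (Fin k) => T.card = d),
          (∏ t ∈ T, π1 (i t) (j t)) * ∏ t ∈ Tᶜ, π0 (i t) (j t)) •
        (iterD D i a * iterD D j b)

/-- Moyal product built from the `ℏ`-dependent matrix `π(ℏ) = π₀ + ℏπ₁`. -/
def moyalNH {R : Type*} [CommRing R] [Module ℂ R] {N : ℕ} (D : Fin N → R → R)
    (π0 π1 : Matrix (Fin N) (Fin N) ℂ) (F G : ℕ → R) : ℕ → R :=
  fun m => ∑ k ∈ Finset.range (m + 1), ∑ d ∈ Finset.range (m - k + 1),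
    ∑ l ∈ Finset.range (m - k - d + 1),
      moyalTermH D π0 π1 k d (F l) (G (m - k - d - l))

/-- The standard Poisson matrix `π` on `ℝ^{2n}` (inverse of the standard symplectic
matrix `ω`, normalized by `Σ_m ω_{jm} π^{mn} = δ_j^n`). -/
def stdPi (n : ℕ) : Matrix (Fin (2 * n)) (Fin (2 * n)) ℂ :=
  Matrix.of fun i j =>
    if (i : ℕ) + n = (j : ℕ) then 1 else if (j : ℕ) + n = (i : ℕ) then -1 else 0

/-- The standard symplectic matrix `ω_{ij}`. -/
def stdOmega (n : ℕ) : Matrix (Fin (2 * n)) (Fin (2 * n)) ℂ := -stdPi n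

/-! ### The formal Weyl algebra `W = ℂ[[y,ℏ]]` -/

/-- The formal Weyl algebra as `ℏ`-coefficient sequences. -/
abbrev Wa (N : ℕ) := ℕ → Wc N

/-- Moyal–Weyl product on `W` for a constant matrix `π`. -/
def wmulPi {N : ℕ} (π : Matrix (Fin N) (Fin N) ℂ) (a b : Wa N) : Wa N := moyalN yD π a b

/-- Moyal–Weyl product on `W` for the standard symplectic Poisson matrix. -/
def wmul {n : ℕ} (a b : Wa (2 * n)) : Wa (2 * n) := wmulPi (stdPi n) a b

/-- The unit `1 ∈ W`. -/
def oneW (N : ℕ) : Wa N := fun m => if m = 0 then 1 else 0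

/-- Scalar multiplication by a formal power series `s ∈ ℂ[[ℏ]]` (given by its
coefficients `s : ℕ → ℂ`). -/
def hsmul {N : ℕ} (s : ℕ → ℂ) (a : Wa N) : Wa N :=
  fun m => ∑ l ∈ Finset.range (m + 1), s l • a (m - l)

/-- The operator `E = -(i/2) Σ_j y^j ∂/∂y^j` on `ℂ[[y]]`. -/
def EulW {N : ℕ} (a : Wc N) : Wc N :=
  Wc.mk fun β => -Complex.I / 2 * (∑ i : Fin N, (β i : ℂ)) * MvPowerSeries.coeff (R := ℂ) β a

/-- `E` on the Weyl algebra, acting on each `ℏ`-coefficient. -/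
def EulWa {N : ℕ} (a : Wa N) : Wa N := fun m => EulW (a m)

/-- Termwise derivative `∂/∂ℏ`. -/
def hD {N : ℕ} (a : Wa N) : Wa N := fun m => (((m + 1 : ℕ) : ℂ)) • a (m + 1)

/-- Multiplication by `ℏ`. -/
def hM {N : ℕ} (a : Wa N) : Wa N := fun m => match m with
  | 0 => 0
  | Nat.succ m' => a m'

/-- Division by `ℏ` (exact on elements divisible by `ℏ`; discards the constant term). -/
def hInv {N : ℕ} (a : Wa N) : Wa N := fun m => a (m + 1)

/-- The `ℏ`-derivative of the Moyal–Weyl product structure: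
`c₁(a,b) = ∂(a⋆b)/∂ℏ − (∂a/∂ℏ)⋆b − a⋆(∂b/∂ℏ)`. -/
def c1W {n : ℕ} (a b : Wa (2 * n)) : Wa (2 * n) :=
  hD (wmul a b) - wmul (hD a) b - wmul a (hD b)

/-! ### W-valued differential forms on ℝ^{2n} -/

/-- Points of `ℝ^{2n}`. -/
abbrev Pt (n : ℕ) := Fin (2 * n) → ℝ

/-- `W`-valued exterior forms on `ℝ^{2n}`: the component at a finite index set
`S = {j₁ < ⋯ < j_q}` is the coefficient of `dx^{j₁} ∧ ⋯ ∧ dx^{j_q}`. -/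
abbrev WF (n : ℕ) := Finset (Fin (2 * n)) → Pt n → Wa (2 * n)

/-- Sign `(-1)^{#{j ∈ S, j < i}}` for inserting `dx^i` in front of `dx^S`. -/
def insSign {N : ℕ} (S : Finset (Fin N)) (i : Fin N) : ℂ :=
  (-1) ^ (S.filter fun j => j < i).card

/-- Koszul sign for merging `dx^{S₁} ∧ dx^{S₂}` into increasing order. -/
def shuffleSign {N : ℕ} (S1 S2 : Finset (Fin N)) : ℂ :=
  (-1) ^ ((S1 ×ˢ S2).filter fun p => p.2 < p.1).card

/-- `∂/∂y^i` on the Weyl algebra. -/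
def yDa {N : ℕ} (i : Fin N) (w : Wa N) : Wa N := fun m => yD i (w m)

/-- The operator `δ a = Σ_i dx^i ∧ ∂a/∂y^i`. -/
def deltaW {n : ℕ} (a : WF n) : WF n :=
  fun S x => ∑ i ∈ S, insSign S i • yDa i (a (S.erase i) x)

/-- The partial derivative `∂/∂x^i` of a `W`-valued function, taken coefficientwise. -/
def xD {n : ℕ} (i : Fin (2 * n)) (f : Pt n → Wa (2 * n)) (x : Pt n) : Wa (2 * n) :=
  fun m => Wc.mk fun β =>
    fderiv ℝ (fun x' => MvPowerSeries.coeff (R := ℂ) β (f x' m)) x (Pi.single i 1)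

/-- The exterior derivative `d a = Σ_i dx^i ∧ ∂a/∂x^i` on `W`-valued forms. -/
def extD {n : ℕ} (a : WF n) : WF n :=
  fun S x => ∑ i ∈ S, insSign S i • xD i (a (S.erase i)) x

/-- The product on `W`-valued forms: Moyal–Weyl product combined with wedge product. -/
def wMulF {n : ℕ} (a b : WF n) : WF n :=
  fun S x => ∑ S1 ∈ S.powerset, shuffleSign S1 (S \ S1) • wmul (a S1 x) (b (S \ S1) x)

/-- Graded commutator `[r, a] = r⋆a − (−1)^{|a|} a⋆r` with a form `r` of degree 1. -/
def comm1 {n : ℕ} (r a : WF n) : WF n :=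
  fun S x => wMulF r a S x - (-1 : ℂ) ^ (S.card - 1) • wMulF a r S x

/-- Graded commutator `[u, a] = u⋆a − a⋆u` with a form `u` of even degree. -/
def commE {n : ℕ} (u a : WF n) : WF n := fun S x => wMulF u a S x - wMulF a u S x

/-- The connection `D = −δ + d + (i/ℏ)[r, ·]` determined by a `W`-valued 1-form `r`. -/
def fedD {n : ℕ} (r a : WF n) : WF n :=
  fun S x => -deltaW a S x + extD a S x + Complex.I • hInv (comm1 r a S x)

/-- A `W`-valued form has smooth coefficients. -/
def WF.Smooth {n : ℕ} (a : WF n) : Prop :=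
  ∀ S m β, ContDiff ℝ (⊤ : ℕ∞) fun x => MvPowerSeries.coeff (R := ℂ) β (a S x m)

/-- A `W`-valued form is homogeneous of form-degree `q`. -/
def isForm {n : ℕ} (q : ℕ) (a : WF n) : Prop := ∀ S, S.card ≠ q → a S = 0

/-- A `W`-valued form is scalar: all coefficients are independent of the `y` variables. -/
def isScalar {n : ℕ} (a : WF n) : Prop :=
  ∀ S x m β, β ≠ 0 → MvPowerSeries.coeff (R := ℂ) β (a S x m) = 0

/-- The constant standard symplectic 2-form `ω = (1/2) Σ ω_{ij} dx^i ∧ dx^j`. -/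
def omegaF (n : ℕ) : WF n :=
  fun S _ m =>
    if m = 0 then
      MvPowerSeries.C (σ := Fin (2 * n)) (R := ℂ)
        (∑ i : Fin (2 * n), ∑ j : Fin (2 * n),
          if i < j ∧ S = {i, j} then stdOmega n i j else 0)
    else 0

/-- The curvature `Ω = ω + δr − dr − (i/ℏ) r⋆r` of the connection `−δ + d + (i/ℏ)[r,·]`. -/
def curv {n : ℕ} (r : WF n) : WF n :=
  fun S x => omegaF n S x + deltaW r S x - extD r S x - Complex.I • hInv (wMulF r r S x)

/-- The operator `δ⁻¹`, acting as `(1/(p+q)) Σ_k y^k ι_k` on the part of `y`-degree `p`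
and form-degree `q` (and as `0` for `p = q = 0`). -/
def deltaInv {n : ℕ} (a : WF n) : WF n :=
  fun S x m => Wc.mk fun β =>
    ((((β.sum fun _ e => e) + S.card : ℕ) : ℂ))⁻¹ *
      ∑ k : Fin (2 * n),
        if k ∉ S ∧ 1 ≤ β k then
          insSign S k * MvPowerSeries.coeff (R := ℂ) (β - Finsupp.single k 1) (a (insert k S) x m)
        else 0

/-! ### x-independent W-valued exterior forms (the graded algebra W⊗Λ) -/

/-- `W`-valued exterior forms with constant coefficients. -/
abbrev WL (n : ℕ) := Finset (Fin (2 * n)) → Wa (2 * n)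

/-- `δ` on `W ⊗ Λ`. -/
def deltaWL {n : ℕ} (a : WL n) : WL n :=
  fun S => ∑ i ∈ S, insSign S i • yDa i (a (S.erase i))

/-- Product (Moyal combined with wedge) on `W ⊗ Λ`. -/
def wMulL {n : ℕ} (a b : WL n) : WL n :=
  fun S => ∑ S1 ∈ S.powerset, shuffleSign S1 (S \ S1) • wmul (a S1) (b (S \ S1))

/-- `E` on `W ⊗ Λ`, acting on the `W`-coefficients. -/
def EulL {n : ℕ} (a : WL n) : WL n := fun S => EulWa (a S)

/-- The `W`-valued 1-form `Σ_{i,j} ω_{ij} y^i dx^j`. -/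
def oydxW (n : ℕ) : WL n :=
  fun S m =>
    if m = 0 then
      ∑ j : Fin (2 * n),
        (if S = {j} then ∑ i : Fin (2 * n), stdOmega n i j • MvPowerSeries.X i else 0)
    else 0

/-- The 1-form `K₀ = −(Er − iℏ ∂r/∂ℏ + i r + (i/2) Σ ω_{ij} y^i dx^j)`. -/
def K0 {n : ℕ} (r : WF n) : WF n :=
  fun S x =>
    -(EulWa (r S x) - Complex.I • hM (hD (r S x)) + Complex.I • r S x
      + (Complex.I / 2) • oydxW n S)

/-- The quantum Liouville-type operator `ρ(u) = (ℏ/i) ∂u/∂ℏ + E u`. -/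
def rhoW {n : ℕ} (u : WF n) : WF n :=
  fun S x m => (-Complex.I * (m : ℂ)) • u S x m + EulW (u S x m)

/-- `c₁` extended to `W`-valued forms. -/
def c1F {n : ℕ} (a b : WF n) : WF n :=
  fun S x => ∑ S1 ∈ S.powerset, shuffleSign S1 (S \ S1) • c1W (a S1 x) (b (S \ S1) x)

/-! ### The Laurent (ℏ-inverted) Weyl algebra and forms -/

/-- The extended Weyl algebra `W⁺ = ℂ[[y]][ℏ⁻¹,ℏ]]` as `ℏ`-coefficient sequences. -/
abbrev WaZ (N : ℕ) := ℤ → Wc N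

/-- Moyal–Weyl product on `W⁺` for a constant matrix `π`. -/
def wmulZPi {N : ℕ} (π : Matrix (Fin N) (Fin N) ℂ) (a b : WaZ N) : WaZ N := moyalZ yD π a b

/-- Moyal–Weyl product on `W⁺` for the standard symplectic Poisson matrix. -/
def wmulZ {n : ℕ} (a b : WaZ (2 * n)) : WaZ (2 * n) := wmulZPi (stdPi n) a b

/-- `W⁺`-valued exterior forms on `ℝ^{2n}`. -/
abbrev WFZ (n : ℕ) := Finset (Fin (2 * n)) → Pt n → WaZ (2 * n)

/-- `∂/∂y^i` on `W⁺`. -/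
def yDaZ {N : ℕ} (i : Fin N) (w : WaZ N) : WaZ N := fun m => yD i (w m)

/-- `δ` on `W⁺`-valued forms. -/
def deltaZ {n : ℕ} (a : WFZ n) : WFZ n :=
  fun S x => ∑ i ∈ S, insSign S i • yDaZ i (a (S.erase i) x)

/-- `∂/∂x^i` on `W⁺`-valued functions. -/
def xDZ {n : ℕ} (i : Fin (2 * n)) (f : Pt n → WaZ (2 * n)) (x : Pt n) : WaZ (2 * n) :=
  fun m => Wc.mk fun β =>
    fderiv ℝ (fun x' => MvPowerSeries.coeff (R := ℂ) β (f x' m)) x (Pi.single i 1)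

/-- Exterior derivative on `W⁺`-valued forms. -/
def extDZ {n : ℕ} (a : WFZ n) : WFZ n :=
  fun S x => ∑ i ∈ S, insSign S i • xDZ i (a (S.erase i)) x

/-- Product on `W⁺`-valued forms. -/
def wMulZF {n : ℕ} (a b : WFZ n) : WFZ n :=
  fun S x => ∑ S1 ∈ S.powerset, shuffleSign S1 (S \ S1) • wmulZ (a S1 x) (b (S \ S1) x)

/-- Graded commutator with a 1-form, on `W⁺`-valued forms. -/
def comm1Z {n : ℕ} (r a : WFZ n) : WFZ n :=
  fun S x => wMulZF r a S x - (-1 : ℂ) ^ (S.card - 1) • wMulZF a r S x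

/-- Division by `ℏ` on `W⁺` (exact: a shift of Laurent coefficients). -/
def shiftZ {N : ℕ} (a : WaZ N) : WaZ N := fun m => a (m + 1)

/-- The connection `D = −δ + d + (i/ℏ)[r,·]` on `W⁺`-valued forms. -/
def fedDZ {n : ℕ} (r a : WFZ n) : WFZ n :=
  fun S x => -deltaZ a S x + extDZ a S x + Complex.I • shiftZ (comm1Z r a S x)

/-- Termwise `∂/∂ℏ` on `W⁺`. -/
def hDZ {N : ℕ} (a : WaZ N) : WaZ N := fun m => ((m + 1 : ℤ) : ℂ) • a (m + 1)

/-- `∂/∂ℏ` on `W⁺`-valued forms. -/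
def hDZF {n : ℕ} (a : WFZ n) : WFZ n := fun S x => hDZ (a S x)

/-- `E` on `W⁺`. -/
def EulZ {N : ℕ} (a : WaZ N) : WaZ N := fun m => EulW (a m)

/-- `E` on `W⁺`-valued forms. -/
def EulZF {n : ℕ} (a : WFZ n) : WFZ n := fun S x => EulZ (a S x)

/-- `c₁` on `W⁺`. -/
def c1Za {n : ℕ} (a b : WaZ (2 * n)) : WaZ (2 * n) :=
  hDZ (wmulZ a b) - wmulZ (hDZ a) b - wmulZ a (hDZ b)

/-- `c₁` on `W⁺`-valued forms. -/
def c1ZF {n : ℕ} (a b : WFZ n) : WFZ n :=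
  fun S x => ∑ S1 ∈ S.powerset, shuffleSign S1 (S \ S1) • c1Za (a S1 x) (b (S \ S1) x)

/-- Smoothness of the coefficients of a `W⁺`-valued form. -/
def WFZ.Smooth {n : ℕ} (a : WFZ n) : Prop :=
  ∀ S m β, ContDiff ℝ (⊤ : ℕ∞) fun x => MvPowerSeries.coeff (R := ℂ) β (a S x m)

/-- Homogeneity of form-degree `q` for `W⁺`-valued forms. -/
def isFormZ {n : ℕ} (q : ℕ) (a : WFZ n) : Prop := ∀ S, S.card ≠ q → a S = 0

/-- A `W⁺`-valued form has power series coefficients (no negative powers of `ℏ`). -/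
def PSupp {n : ℕ} (a : WFZ n) : Prop := ∀ S x m, m < 0 → a S x m = 0

/-- A Laurent series is bounded below in `ℏ`-degree. -/
def BddZ {α : Type*} [Zero α] (f : ℤ → α) : Prop :=
  ∃ N : ℕ, ∀ m : ℤ, m < -(N : ℤ) → f m = 0

/-! ### Smooth functions and star-products on ℝ^N -/

/-- Complex-valued functions on `ℝ^N`. -/
abbrev SmFn (N : ℕ) := (Fin N → ℝ) → ℂ

/-- Partial derivative `∂/∂x^i` of a (smooth) function. -/
def xDf {N : ℕ} (i : Fin N) (f : SmFn N) : SmFn N := fun x => fderiv ℝ f x (Pi.single i 1)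

/-- Iterated partial derivative `∂^α`. -/
def xDfM {N : ℕ} (α : Fin N →₀ ℕ) (f : SmFn N) : SmFn N :=
  (List.finRange N).foldr (fun i g => (xDf i)^[α i] g) f

/-- Formal power series with function coefficients: `C^∞(ℝ^N,ℂ)[[ℏ]]`. -/
abbrev SmSer (N : ℕ) := ℕ → SmFn N

/-- Formal Laurent series with function coefficients: `C^∞(ℝ^N,ℂ)[ℏ⁻¹,ℏ]]`. -/
abbrev SmLau (N : ℕ) := ℤ → SmFn N

/-- All coefficients of a series are smooth. -/
def SmSer.Smooth {N : ℕ} (F : SmSer N) : Prop := ∀ m, ContDiff ℝ (⊤ : ℕ∞) (F m)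

/-- All coefficients of a Laurent series are smooth. -/
def SmLau.Smooth {N : ℕ} (F : SmLau N) : Prop := ∀ m, ContDiff ℝ (⊤ : ℕ∞) (F m)

/-- The Moyal star-product on `C^∞(ℝ^N,ℂ)[[ℏ]]` for a constant matrix `π`. -/
def fMul {N : ℕ} (π : Matrix (Fin N) (Fin N) ℂ) (F G : SmSer N) : SmSer N :=
  moyalN xDf π F G

/-- The Moyal star-product on Laurent series. -/
def fMulZ {N : ℕ} (π : Matrix (Fin N) (Fin N) ℂ) (F G : SmLau N) : SmLau N :=
  moyalZ xDf π F G

/-- The Moyal star-product with `ℏ`-dependent matrix `π(ℏ) = π₀ + ℏπ₁`. -/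
def fMulH {N : ℕ} (π0 π1 : Matrix (Fin N) (Fin N) ℂ) (F G : SmSer N) : SmSer N :=
  moyalNH xDf π0 π1 F G

/-- The constant series `1`. -/
def oneSer (N : ℕ) : SmSer N := fun m => if m = 0 then (fun _ => 1) else 0

/-- The standard Poisson bracket `{f,g} = Σ π^{ij} ∂_i f ∂_j g` on `ℝ^{2n}`. -/
def pb (n : ℕ) (f g : SmFn (2 * n)) : SmFn (2 * n) :=
  fun x => ∑ i, ∑ j, stdPi n i j * xDf i f x * xDf j g x

/-! ### Multidifferential operators and star-products -/

/-- A `k`-multidifferential operator on `C^∞(ℝ^N,ℂ)`: a finite sum of terms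
`u(x) (∂^{α₁}f₁)⋯(∂^{α_k}f_k)`, recorded by its finitely many coefficients. -/
abbrev MDOp (N k : ℕ) := (Fin k → (Fin N →₀ ℕ)) →₀ SmFn N

/-- Action of a multidifferential operator. -/
def MDOp.app {N k : ℕ} (c : MDOp N k) (f : Fin k → SmFn N) : SmFn N :=
  fun x => c.sum fun T u => u x * ∏ t, xDfM (T t) (f t) x

/-- A multidifferential operator has smooth coefficients. -/
def MDOp.Smooth {N k : ℕ} (c : MDOp N k) : Prop := ∀ T, ContDiff ℝ (⊤ : ℕ∞) (c T)

/-- A family of bidifferential operators `C_k`, extended `ℂ[[ℏ]]`-bilinearly: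
`F ⋆ G = Σ ℏ^{k+l+l'} C_k(F_l, G_{l'})`. -/
def starN {N : ℕ} (C : ℕ → MDOp N 2) (F G : SmSer N) : SmSer N :=
  fun m => ∑ k ∈ Finset.range (m + 1), ∑ l ∈ Finset.range (m - k + 1),
    MDOp.app (C k) ![F l, G (m - k - l)]

/-- The `ℂ[ℏ⁻¹,ℏ]]`-bilinear extension of a star-product to Laurent series. -/
def starZ {N : ℕ} (C : ℕ → MDOp N 2) (F G : SmLau N) : SmLau N :=
  fun m => ∑ᶠ p : ℕ × ℤ, MDOp.app (C p.1) ![F p.2, G (m - p.1 - p.2)]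

/-- Action of a Laurent cochain `c = Σ_l ℏ^l c_l` of multidifferential operators
on a `k`-tuple of Laurent series. -/
def lac {N k : ℕ} (cc : ℤ → MDOp N k) (u : Fin k → SmLau N) : SmLau N :=
  fun m => ∑ᶠ v : Fin k → ℤ, MDOp.app (cc (m - ∑ t, v t)) fun t => u t (v t)

/-- A differential star-product on `ℝ^{2n}` quantizing the standard symplectic
structure: `f ⋆ g = Σ ℏ^k C_k(f,g)` with `C_k` bidifferential, `C₀(f,g) = fg`,
`1` a unit, `⋆` associative, and `C₁(f,g) − C₁(g,f) = −i{f,g}`. -/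
structure DiffStar (n : ℕ) where
  C : ℕ → MDOp (2 * n) 2
  smooth : ∀ k, MDOp.Smooth (C k)
  C0 : ∀ f g : SmFn (2 * n), MDOp.app (C 0) ![f, g] = f * g
  unit_left : ∀ F : SmSer (2 * n), SmSer.Smooth F → starN C (oneSer (2 * n)) F = F
  unit_right : ∀ F : SmSer (2 * n), SmSer.Smooth F → starN C F (oneSer (2 * n)) = F
  assoc : ∀ F G H : SmSer (2 * n), SmSer.Smooth F → SmSer.Smooth G → SmSer.Smooth H →
    starN C (starN C F G) H = starN C F (starN C G H)
  C1skew : ∀ f g : SmFn (2 * n), ContDiff ℝ (⊤ : ℕ∞) f → ContDiff ℝ (⊤ : ℕ∞) g →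
    MDOp.app (C 1) ![f, g] - MDOp.app (C 1) ![g, f] = fun x => -Complex.I * pb n f g x

/-! ### Hochschild coboundary -/

/-- The Hochschild coboundary `b̃` of a `k`-cochain with respect to a product `mul`. -/
def hoch {A : Type*} [AddCommGroup A] (mul : A → A → A) {k : ℕ}
    (c : (Fin k → A) → A) : (Fin (k + 1) → A) → A :=
  fun u =>
    mul (u 0) (c fun t => u t.succ)
      + ∑ i : Fin k, ((-1 : ℤ) ^ ((i : ℕ) + 1)) •
          c (fun j => if (j : ℕ) < (i : ℕ) then u j.castSucc
            else if (j : ℕ) = (i : ℕ) then mul (u j.castSucc) (u j.succ)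
            else u j.succ)
      + ((-1 : ℤ) ^ (k + 1)) • mul (c fun t => u t.castSucc) (u (Fin.last k))

/-! ### Formal differential operators on ℂ[[y]] -/

/-- A formal `k`-differential operator on `ℂ[[y^1,…,y^N]]`:
`c(a₁,…,a_k) = Σ_T u^T (∂^{T 1}a₁)⋯(∂^{T k}a_k)` with coefficients
`u^T ∈ ℂ[[y]]` such that for each degree `d` only finitely many tuples `T` have a
coefficient containing a nonzero monomial of degree `≤ d`. -/
structure FDOp (N k : ℕ) where
  u : (Fin k → (Fin N →₀ ℕ)) → Wc N
  fin : ∀ d : ℕ,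
    {T : Fin k → (Fin N →₀ ℕ) | ∃ β : Fin N →₀ ℕ,
      (β.sum fun _ e => e) ≤ d ∧ MvPowerSeries.coeff (R := ℂ) β (u T) ≠ 0}.Finite

/-- Action of a formal differential operator (the defining sum converges in the
`y`-adic topology; each coefficient receives only finitely many contributions). -/
def FDOp.app {N k : ℕ} (P : FDOp N k) (a : Fin k → Wc N) : Wc N :=
  Wc.mk fun β => ∑ᶠ T : Fin k → (Fin N →₀ ℕ),
    MvPowerSeries.coeff (R := ℂ) β (P.u T * ∏ t, yDM (T t) (a t))

/-- Action of a Laurent cochain `c = Σ_l ℏ^l c_l` of formal differential operators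
on a `k`-tuple of elements of `W⁺`. -/
def flac {N k : ℕ} (cc : ℤ → FDOp N k) (a : Fin k → WaZ N) : WaZ N :=
  fun m => ∑ᶠ v : Fin k → ℤ, FDOp.app (cc (m - ∑ t, v t)) fun t => a t (v t)

/-! ### Flat sections, Taylor series and quantum exponential -/

/-- Fiberwise Taylor series of a smooth function at `x`. -/
def taylorW {N : ℕ} (f : SmFn N) (x : Fin N → ℝ) : Wc N :=
  Wc.mk fun β => (∏ i : Fin N, ((β i).factorial : ℂ))⁻¹ * xDfM β f x

/-- Sections of the Weyl bundle over `ℝ^{2n}` (W-valued 0-forms). -/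
abbrev Sect (n : ℕ) := Pt n → Wa (2 * n)

/-- The fiberwise Taylor lift of a series of smooth functions. -/
def taylorS {n : ℕ} (F : SmSer (2 * n)) : Sect n := fun x m => taylorW (F m) x

/-- A section has smooth coefficients. -/
def Sect.Smooth {n : ℕ} (u : Sect n) : Prop :=
  ∀ m β, ContDiff ℝ (⊤ : ℕ∞) fun x => MvPowerSeries.coeff (R := ℂ) β (u x m)

/-- A section is flat for `D = −δ + d`: its component equations read
`∂u/∂x^i = ∂u/∂y^i` for all `i`. -/
def Sect.Flat {n : ℕ} (u : Sect n) : Prop :=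
  ∀ (i : Fin (2 * n)) (x : Pt n), xD i u x = yDa i (u x)

/-- The symbol map `σ(u) = u|_{y=0}`. -/
def sigma {n : ℕ} (u : Sect n) : SmSer (2 * n) :=
  fun m x => MvPowerSeries.coeff (R := ℂ) 0 (u x m)

/-- Fiberwise Moyal–Weyl product of sections. -/
def wmulS {n : ℕ} (u v : Sect n) : Sect n := fun x => wmul (u x) (v x)

/-! ### Vector fields and Liouville-type operators -/

/-- Action of a vector field `X = Σ_j X^j ∂_j` on a function. -/
def XAct {N : ℕ} (X : Fin N → SmFn N) (f : SmFn N) : SmFn N :=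
  fun x => ∑ j, X j x * xDf j f x

/-- A smooth function viewed as a series concentrated in `ℏ`-degree `0`. -/
def embS {N : ℕ} (f : SmFn N) : SmSer N := fun m => if m = 0 then f else 0

/-- The Hochschild coboundary `b̃X(f,g) = f⋆(Xg) − X(f⋆g) + (Xf)⋆g` of a vector
field, for the Moyal star-product with constant matrix `π`. -/
def bXMoyal {N : ℕ} (π : Matrix (Fin N) (Fin N) ℂ) (X : Fin N → SmFn N)
    (f g : SmFn N) : SmSer N :=
  fMul π (embS f) (embS (XAct X g)) - (fun m => XAct X (fMul π (embS f) (embS g) m))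
    + fMul π (embS (XAct X f)) (embS g)

/-- The operator `ℏ ∂_ℏ + X` on `C^∞(ℝ^N,ℂ)[[ℏ]]`. -/
def LOp {N : ℕ} (X : Fin N → SmFn N) (F : SmSer N) : SmSer N :=
  fun m x => (m : ℂ) * F m x + XAct X (F m) x

/-- The derivative of a star-product with respect to `ℏ`:
`c(f,g) = Σ_{k≥1} k ℏ^{k-1} C_k(f,g)`, extended `ℂ[[ℏ]]`-bilinearly. -/
def dStar {N : ℕ} (C : ℕ → MDOp N 2) (F G : SmSer N) : SmSer N :=
  fun m => ∑ k ∈ Finset.Icc 1 (m + 1), (k : ℂ) •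
    ∑ l ∈ Finset.range (m + 1 - k + 1), MDOp.app (C k) ![F l, G (m + 1 - k - l)]

end StarPaper
namespace StarPaper
noncomputable section
open MvPowerSeries

variable {N : ℕ}

lemma coeff_mk (f : (Fin N →₀ ℕ) → ℂ) (β : Fin N →₀ ℕ) :
    MvPowerSeries.coeff (R := ℂ) β (Wc.mk f) = f β := rfl

lemma Wc.exten {a b : Wc N} (h : ∀ β, MvPowerSeries.coeff (R := ℂ) β a = MvPowerSeries.coeff (R := ℂ) β b) :
    a = b := MvPowerSeries.ext h

lemma yD_coeff (i : Fin N) (a : Wc N) (β) :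
    MvPowerSeries.coeff (R := ℂ) β (yD i a) =
      ((β i : ℂ) + 1) * MvPowerSeries.coeff (R := ℂ) (β + Finsupp.single i 1) a := rfl

def eig (β : Fin N →₀ ℕ) : ℂ := -Complex.I / 2 * (∑ i : Fin N, (β i : ℂ))

lemma EulW_coeff (a : Wc N) (β) :
    MvPowerSeries.coeff (R := ℂ) β (EulW a) = eig β * MvPowerSeries.coeff (R := ℂ) β a := by
  rw [EulW, coeff_mk, eig, mul_assoc]

lemma yD_add (i : Fin N) (a b : Wc N) : yD i (a + b) = yD i a + yD i b := by
  apply Wc.exten; intro β; simp only [yD_coeff, map_add]; ring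

lemma yD_smul (i : Fin N) (c : ℂ) (a : Wc N) : yD i (c • a) = c • yD i a := by
  apply Wc.exten; intro β
  simp only [yD_coeff, MvPowerSeries.coeff_smul, smul_eq_mul]; ring

lemma yD_zero (i : Fin N) : yD i (0 : Wc N) = 0 := by
  apply Wc.exten; intro β; simp [yD_coeff]

lemma EulW_add (a b : Wc N) : EulW (a + b) = EulW a + EulW b := by
  apply Wc.exten; intro β; simp only [EulW_coeff, map_add]; ring

lemma EulW_smul (c : ℂ) (a : Wc N) : EulW (c • a) = c • EulW a := by
  apply Wc.exten; intro β
  simp only [EulW_coeff, MvPowerSeries.coeff_smul, smul_eq_mul]; ring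

lemma EulW_zero : EulW (0 : Wc N) = 0 := by
  apply Wc.exten; intro β; simp [EulW_coeff]

lemma EulW_sum {α : Type*} (s : Finset α) (f : α → Wc N) :
    EulW (∑ x ∈ s, f x) = ∑ x ∈ s, EulW (f x) := by
  classical
  induction s using Finset.induction_on with
  | empty => simp [EulW_zero]
  | insert _ _ h ih => rw [Finset.sum_insert h, Finset.sum_insert h, EulW_add, ih]

lemma E_yD (i : Fin N) (a : Wc N) :
    EulW (yD i a) = yD i (EulW a) + (Complex.I / 2) • yD i a := by
  apply Wc.exten; intro β
  simp only [EulW_coeff, yD_coeff, map_add, MvPowerSeries.coeff_smul, smul_eq_mul, eig]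
  have h1 : (∑ k : Fin N, (((β + Finsupp.single i 1 : Fin N →₀ ℕ)) k : ℂ))
      = (∑ k : Fin N, (β k : ℂ)) + 1 := by
    have : ∀ k : Fin N, (((β + Finsupp.single i 1 : Fin N →₀ ℕ)) k : ℂ)
        = (β k : ℂ) + (if i = k then 1 else 0) := by
      intro k; simp [Finsupp.add_apply, Finsupp.single_apply]
    rw [Finset.sum_congr rfl fun k _ => this k, Finset.sum_add_distrib]
    simp
  rw [h1]; ring

lemma EulW_mul (a b : Wc N) : EulW (a * b) = EulW a * b + a * EulW b := by
  apply Wc.exten; intro β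
  simp only [EulW_coeff, map_add, MvPowerSeries.coeff_mul, Finset.mul_sum,
    ← Finset.sum_add_distrib]
  apply Finset.sum_congr rfl
  intro p hp
  have hpq : p.1 + p.2 = β := Finset.HasAntidiagonal.mem_antidiagonal.mp hp
  simp only [EulW_coeff, eig]
  have : (∑ i : Fin N, (β i : ℂ)) = (∑ i : Fin N, (p.1 i : ℂ)) + ∑ i : Fin N, (p.2 i : ℂ) := by
    rw [← Finset.sum_add_distrib]
    apply Finset.sum_congr rfl
    intro i _
    rw [← hpq]; push_cast [Finsupp.add_apply]; ring
  rw [this]; ring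

end
end StarPaper
namespace StarPaper
noncomputable section
open MvPowerSeries

variable {N : ℕ}

lemma iterD_zeroth (v : Fin 0 → Fin N) (a : Wc N) : iterD yD v a = a := rfl

lemma iterD_succ {k : ℕ} (v : Fin (k+1) → Fin N) (a : Wc N) :
    iterD yD v a = yD (v 0) (iterD yD (fun t => v t.succ) a) := rfl

lemma iterD_add : ∀ {k : ℕ} (v : Fin k → Fin N) (a b : Wc N),
    iterD yD v (a + b) = iterD yD v a + iterD yD v b := by
  intro k
  induction k with
  | zero => intro v a b; rfl
  | succ k ih => intro v a b; rw [iterD_succ, iterD_succ, iterD_succ, ih, yD_add]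

lemma iterD_smul : ∀ {k : ℕ} (v : Fin k → Fin N) (c : ℂ) (a : Wc N),
    iterD yD v (c • a) = c • iterD yD v a := by
  intro k
  induction k with
  | zero => intro v c a; rfl
  | succ k ih => intro v c a; rw [iterD_succ, iterD_succ, ih, yD_smul]

lemma iterD_zero : ∀ {k : ℕ} (v : Fin k → Fin N), iterD yD v (0 : Wc N) = 0 := by
  intro k
  induction k with
  | zero => intro v; rfl
  | succ k ih => intro v; rw [iterD_succ, ih, yD_zero]

lemma E_iterD : ∀ {k : ℕ} (v : Fin k → Fin N) (a : Wc N),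
    EulW (iterD yD v a)
      = iterD yD v (EulW a) + ((k : ℂ) * (Complex.I / 2)) • iterD yD v a := by
  intro k
  induction k with
  | zero => intro v a; simp [iterD_zeroth]
  | succ k ih =>
    intro v a
    rw [iterD_succ, E_yD, ih, yD_add, yD_smul, iterD_succ, ← iterD_succ, ← iterD_succ]
    rw [add_assoc, ← add_smul]
    congr 2
    push_cast; ring

section MT
variable (π : Matrix (Fin N) (Fin N) ℂ)

lemma mT_add_left (k : ℕ) (a a' b : Wc N) :
    moyalTerm yD π k (a + a') b = moyalTerm yD π k a b + moyalTerm yD π k a' b := by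
  unfold moyalTerm
  rw [← smul_add]
  congr 1
  rw [← Finset.sum_add_distrib]
  apply Finset.sum_congr rfl; intro i _
  rw [← Finset.sum_add_distrib]
  apply Finset.sum_congr rfl; intro j _
  rw [iterD_add, add_mul, smul_add]

lemma mT_add_right (k : ℕ) (a b b' : Wc N) :
    moyalTerm yD π k a (b + b') = moyalTerm yD π k a b + moyalTerm yD π k a b' := by
  unfold moyalTerm
  rw [← smul_add]
  congr 1
  rw [← Finset.sum_add_distrib]
  apply Finset.sum_congr rfl; intro i _
  rw [← Finset.sum_add_distrib]
  apply Finset.sum_congr rfl; intro j _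
  rw [iterD_add, mul_add, smul_add]

lemma mT_smul_left (k : ℕ) (c : ℂ) (a b : Wc N) :
    moyalTerm yD π k (c • a) b = c • moyalTerm yD π k a b := by
  unfold moyalTerm
  rw [smul_comm]
  congr 1
  rw [Finset.smul_sum]
  apply Finset.sum_congr rfl; intro i _
  rw [Finset.smul_sum]
  apply Finset.sum_congr rfl; intro j _
  rw [iterD_smul, smul_mul_assoc, smul_comm]

lemma mT_smul_right (k : ℕ) (c : ℂ) (a b : Wc N) :
    moyalTerm yD π k a (c • b) = c • moyalTerm yD π k a b := by
  unfold moyalTerm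
  rw [smul_comm]
  congr 1
  rw [Finset.smul_sum]
  apply Finset.sum_congr rfl; intro i _
  rw [Finset.smul_sum]
  apply Finset.sum_congr rfl; intro j _
  rw [iterD_smul, mul_smul_comm, smul_comm]

lemma mT_zero_left (k : ℕ) (b : Wc N) : moyalTerm yD π k (0 : Wc N) b = 0 := by
  unfold moyalTerm
  simp [iterD_zero]

lemma mT_zero_right (k : ℕ) (a : Wc N) : moyalTerm yD π k a (0 : Wc N) = 0 := by
  unfold moyalTerm
  simp [iterD_zero]

lemma E_mT (k : ℕ) (a b : Wc N) :
    EulW (moyalTerm yD π k a b)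
      = moyalTerm yD π k (EulW a) b + moyalTerm yD π k a (EulW b)
        + (Complex.I * (k : ℂ)) • moyalTerm yD π k a b := by
  unfold moyalTerm
  rw [EulW_smul, smul_comm (Complex.I * (k:ℂ)), ← smul_add, ← smul_add]
  congr 1
  rw [EulW_sum, Finset.smul_sum, ← Finset.sum_add_distrib, ← Finset.sum_add_distrib]
  apply Finset.sum_congr rfl; intro i _
  rw [EulW_sum, Finset.smul_sum, ← Finset.sum_add_distrib, ← Finset.sum_add_distrib]
  apply Finset.sum_congr rfl; intro j _
  rw [EulW_smul, smul_comm (Complex.I * (k:ℂ)), ← smul_add, ← smul_add]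
  congr 1
  rw [EulW_mul, E_iterD, E_iterD, add_mul, mul_add, smul_mul_assoc, mul_smul_comm]
  module

end MT
end
end StarPaper
namespace StarPaper
noncomputable section
open MvPowerSeries

variable {N : ℕ}

/-- The operator `ρ = (ℏ/i)∂_ℏ + E` on the Weyl algebra. -/
def PW (a : Wa N) : Wa N := fun m => (-Complex.I * (m : ℂ)) • a m + EulW (a m)

lemma rhoW_eq {n : ℕ} (u : WF n) (S : Finset (Fin (2*n))) (x : Pt n) :
    rhoW u S x = PW (u S x) := rfl

lemma PW_add (a b : Wa N) : PW (a + b) = PW a + PW b := by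
  funext m
  simp only [PW, Pi.add_apply, EulW_add, smul_add]
  module

lemma PW_smul (c : ℂ) (a : Wa N) : PW (c • a) = c • PW a := by
  funext m
  simp only [PW, Pi.smul_apply, EulW_smul, smul_comm c, smul_add]

lemma PW_neg (a : Wa N) : PW (-a) = -PW a := by
  have := PW_smul (-1 : ℂ) a
  simpa using this

lemma PW_sub (a b : Wa N) : PW (a - b) = PW a - PW b := by
  rw [sub_eq_add_neg, sub_eq_add_neg, PW_add, PW_neg]

lemma PW_zero : PW (0 : Wa N) = 0 := by
  funext m; simp [PW, EulW_zero]

lemma PW_yDa (j : Fin N) (a : Wa N) :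
    PW (yDa j a) = yDa j (PW a) + (Complex.I / 2) • yDa j a := by
  funext m
  simp only [PW, yDa, Pi.add_apply, Pi.smul_apply, E_yD, yD_add, yD_smul]
  module

lemma PW_hInv (v : Wa N) : PW (hInv v) = hInv (PW v) + Complex.I • hInv v := by
  funext m
  simp only [PW, hInv, Pi.add_apply, Pi.smul_apply]
  have : ((m + 1 : ℕ) : ℂ) = (m : ℂ) + 1 := by push_cast; ring
  rw [this]
  module

lemma hM_zeroth (a : Wa N) : hM a 0 = 0 := rfl
lemma hM_succ (a : Wa N) (m : ℕ) : hM a (m+1) = a m := rfl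

lemma hInv_hM (a : Wa N) : hInv (hM a) = a := by
  funext m; rfl

lemma hInv_smul (c : ℂ) (a : Wa N) : hInv (c • a) = c • hInv a := rfl
lemma hInv_add (a b : Wa N) : hInv (a + b) = hInv a + hInv b := rfl
lemma hInv_sub (a b : Wa N) : hInv (a - b) = hInv a - hInv b := rfl
lemma hInv_neg (a : Wa N) : hInv (-a) = -hInv a := rfl
lemma hInv_zero : hInv (0 : Wa N) = 0 := rfl

lemma PW_split (a : Wa N) : PW a = -Complex.I • hM (hD a) + EulWa a := by
  funext m
  cases m with
  | zero => simp [PW, hM_zeroth, EulWa]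
  | succ m =>
    simp only [PW, hM_succ, hD, EulWa, Pi.add_apply, Pi.smul_apply, smul_smul]

section WmulLin
variable {n : ℕ}

lemma wmul_add_left (a a' b : Wa (2*n)) :
    wmul (a + a') b = wmul a b + wmul a' b := by
  funext m
  simp only [wmul, wmulPi, moyalN, Pi.add_apply, mT_add_left, ← Finset.sum_add_distrib]

lemma wmul_add_right (a b b' : Wa (2*n)) :
    wmul a (b + b') = wmul a b + wmul a b' := by
  funext m
  simp only [wmul, wmulPi, moyalN, Pi.add_apply, mT_add_right, ← Finset.sum_add_distrib]

lemma wmul_smul_left (c : ℂ) (a b : Wa (2*n)) :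
    wmul (c • a) b = c • wmul a b := by
  funext m
  simp only [wmul, wmulPi, moyalN, Pi.smul_apply, mT_smul_left, ← Finset.smul_sum]

lemma wmul_smul_right (c : ℂ) (a b : Wa (2*n)) :
    wmul a (c • b) = c • wmul a b := by
  funext m
  simp only [wmul, wmulPi, moyalN, Pi.smul_apply, mT_smul_right, ← Finset.smul_sum]

lemma wmul_zero_left (b : Wa (2*n)) : wmul (0 : Wa (2*n)) b = 0 := by
  funext m
  simp [wmul, wmulPi, moyalN, mT_zero_left]

lemma wmul_zero_right (a : Wa (2*n)) : wmul a (0 : Wa (2*n)) = 0 := by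
  funext m
  simp [wmul, wmulPi, moyalN, mT_zero_right]

lemma wmul_neg_left (a b : Wa (2*n)) : wmul (-a) b = -wmul a b := by
  have := wmul_smul_left (-1 : ℂ) a b; simpa using this

lemma wmul_neg_right (a b : Wa (2*n)) : wmul a (-b) = -wmul a b := by
  have := wmul_smul_right (-1 : ℂ) a b; simpa using this

lemma wmul_sub_left (a a' b : Wa (2*n)) : wmul (a - a') b = wmul a b - wmul a' b := by
  rw [sub_eq_add_neg, sub_eq_add_neg, wmul_add_left, wmul_neg_left]

lemma wmul_sub_right (a b b' : Wa (2*n)) : wmul a (b - b') = wmul a b - wmul a b' := by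
  rw [sub_eq_add_neg, sub_eq_add_neg, wmul_add_right, wmul_neg_right]

lemma P_wmul (a b : Wa (2*n)) :
    PW (wmul a b) = wmul (PW a) b + wmul a (PW b) := by
  funext m
  simp only [PW, wmul, wmulPi, moyalN, Pi.add_apply]
  simp only [EulW_sum, Finset.smul_sum, mT_add_left, mT_smul_left, mT_add_right,
    mT_smul_right, E_mT, ← Finset.sum_add_distrib]
  apply Finset.sum_congr rfl; intro k hk
  apply Finset.sum_congr rfl; intro l hl
  have hk' : k ≤ m := by have := Finset.mem_range.mp hk; omega
  have hl' : l ≤ m - k := by have := Finset.mem_range.mp hl; omega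
  have hmn : ((m - k - l : ℕ) : ℂ) = (m : ℂ) - (k : ℂ) - (l : ℂ) := by
    have h : (m - k - l) + (k + l) = m := by omega
    have h2 := congrArg (fun t : ℕ => (t : ℂ)) h
    push_cast at h2
    linear_combination h2
  rw [hmn]
  module

end WmulLin
end
end StarPaper
namespace StarPaper
noncomputable section
open MvPowerSeries

variable {n : ℕ}

lemma sumPiOmega_col (q j : Fin (2*n)) :
    ∑ p : Fin (2*n), stdPi n p q * stdOmega n p j = if q = j then (-1 : ℂ) else 0 := by
  have hq2 := q.isLt
  have hj2 := j.isLt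
  rcases Nat.lt_or_ge (q : ℕ) n with h | h
  · have hb : (q : ℕ) + n < 2 * n := by omega
    rw [Finset.sum_eq_single (⟨(q : ℕ) + n, hb⟩ : Fin (2*n))]
    · simp only [stdPi, stdOmega, Matrix.of_apply, Matrix.neg_apply, Fin.ext_iff]
      split_ifs <;> first | ring1 | (exfalso; omega)
    · intro p _ hp
      have hv : (p : ℕ) ≠ (q : ℕ) + n := by
        intro hh; exact hp (Fin.ext (by simpa using hh))
      simp only [stdPi, stdOmega, Matrix.of_apply, Matrix.neg_apply]
      rw [if_neg (by omega), if_neg (by omega)]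
      ring
    · intro hmem; exact absurd (Finset.mem_univ _) hmem
  · have hq2 : (q : ℕ) < 2 * n := q.isLt
    have hb : (q : ℕ) - n < 2 * n := by omega
    rw [Finset.sum_eq_single (⟨(q : ℕ) - n, hb⟩ : Fin (2*n))]
    · simp only [stdPi, stdOmega, Matrix.of_apply, Matrix.neg_apply, Fin.ext_iff]
      split_ifs <;> first | ring1 | (exfalso; omega)
    · intro p _ hp
      have hv : (p : ℕ) ≠ (q : ℕ) - n := by
        intro hh; exact hp (Fin.ext (by simpa using hh))
      simp only [stdPi, stdOmega, Matrix.of_apply, Matrix.neg_apply]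
      rw [if_neg (by omega), if_neg (by omega)]
      ring
    · intro hmem; exact absurd (Finset.mem_univ _) hmem

lemma sumPiOmega_row (p j : Fin (2*n)) :
    ∑ q : Fin (2*n), stdPi n p q * stdOmega n q j = if p = j then (1 : ℂ) else 0 := by
  have hp2' := p.isLt
  have hj2 := j.isLt
  rcases Nat.lt_or_ge (p : ℕ) n with h | h
  · have hb : (p : ℕ) + n < 2 * n := by omega
    rw [Finset.sum_eq_single (⟨(p : ℕ) + n, hb⟩ : Fin (2*n))]
    · simp only [stdPi, stdOmega, Matrix.of_apply, Matrix.neg_apply, Fin.ext_iff]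
      split_ifs <;> first | ring1 | (exfalso; omega)
    · intro q _ hq
      have hv : (q : ℕ) ≠ (p : ℕ) + n := by
        intro hh; exact hq (Fin.ext (by simpa using hh))
      simp only [stdPi, stdOmega, Matrix.of_apply, Matrix.neg_apply]
      rw [if_neg (by omega), if_neg (by omega)]
      ring
    · intro hmem; exact absurd (Finset.mem_univ _) hmem
  · have hp2 : (p : ℕ) < 2 * n := p.isLt
    have hb : (p : ℕ) - n < 2 * n := by omega
    rw [Finset.sum_eq_single (⟨(p : ℕ) - n, hb⟩ : Fin (2*n))]
    · simp only [stdPi, stdOmega, Matrix.of_apply, Matrix.neg_apply, Fin.ext_iff]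
      split_ifs <;> first | ring1 | (exfalso; omega)
    · intro q _ hq
      have hv : (q : ℕ) ≠ (p : ℕ) - n := by
        intro hh; exact hq (Fin.ext (by simpa using hh))
      simp only [stdPi, stdOmega, Matrix.of_apply, Matrix.neg_apply]
      rw [if_neg (by omega), if_neg (by omega)]
      ring
    · intro hmem; exact absurd (Finset.mem_univ _) hmem

end
end StarPaper
namespace StarPaper
noncomputable section
open MvPowerSeries

lemma add_single_eq_single {N : ℕ} {β : Fin N →₀ ℕ} {p i : Fin N} :
    β + Finsupp.single p 1 = Finsupp.single i 1 ↔ β = 0 ∧ i = p := by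
  constructor
  · intro h
    have hip : i = p := by
      by_contra hip
      have := DFunLike.congr_fun h p
      simp [Finsupp.add_apply, Finsupp.single_apply, hip] at this
    subst hip
    refine ⟨?_, rfl⟩
    have h2 : β + Finsupp.single i 1 = 0 + Finsupp.single i 1 := by rw [h, zero_add]
    exact add_right_cancel h2
  · rintro ⟨rfl, rfl⟩; rw [zero_add]

lemma C_mul_eq_smul {N : ℕ} (c : ℂ) (x : Wc N) :
    MvPowerSeries.C (σ := Fin N) (R := ℂ) c * x = c • x := by
  apply Wc.exten; intro β
  simp [MvPowerSeries.coeff_C_mul, MvPowerSeries.coeff_smul]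

lemma mul_C_eq_smul {N : ℕ} (c : ℂ) (x : Wc N) :
    x * MvPowerSeries.C (σ := Fin N) (R := ℂ) c = c • x := by
  rw [mul_comm, C_mul_eq_smul]

variable {n : ℕ}

/-- The `y`-linear power series `Σ_i ω_{ij} y^i`. -/
def W0 (j : Fin (2*n)) : Wc (2*n) := ∑ i : Fin (2*n), stdOmega n i j • MvPowerSeries.X i

lemma oydxW_singleton (j : Fin (2*n)) :
    oydxW n {j} = fun m => if m = 0 then W0 j else 0 := by
  funext m
  by_cases hm : m = 0
  · subst hm
    simp only [oydxW, if_pos rfl, W0]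
    rw [Finset.sum_eq_single j]
    · rw [if_pos rfl]
    · intro b _ hb
      rw [if_neg (by simpa [Finset.singleton_inj] using fun h => hb h.symm)]
    · intro hmem; exact absurd (Finset.mem_univ _) hmem
  · simp [oydxW, hm]

lemma coeff_W0 (j : Fin (2*n)) (γ : Fin (2*n) →₀ ℕ) :
    MvPowerSeries.coeff (R := ℂ) γ (W0 j)
      = ∑ i : Fin (2*n), stdOmega n i j * (if γ = Finsupp.single i 1 then 1 else 0) := by
  rw [W0, map_sum]
  apply Finset.sum_congr rfl; intro i _
  rw [MvPowerSeries.coeff_smul, MvPowerSeries.coeff_X]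

lemma yD_W0 (p j : Fin (2*n)) :
    yD p (W0 j) = MvPowerSeries.C (σ := Fin (2*n)) (R := ℂ) (stdOmega n p j) := by
  apply Wc.exten; intro β
  rw [yD_coeff, coeff_W0, MvPowerSeries.coeff_C]
  simp only [add_single_eq_single]
  by_cases hβ : β = 0
  · subst hβ
    rw [if_pos rfl, Finset.sum_eq_single p]
    · simp
    · intro i _ hi
      rw [if_neg (by simp [hi]), mul_zero]
    · intro hmem; exact absurd (Finset.mem_univ _) hmem
  · rw [if_neg hβ, Finset.sum_eq_zero, mul_zero]
    intro i _
    rw [if_neg (by simp [hβ]), mul_zero]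

lemma yD_C (q : Fin (2*n)) (c : ℂ) :
    yD q (MvPowerSeries.C (σ := Fin (2*n)) (R := ℂ) c) = 0 := by
  apply Wc.exten; intro β
  rw [yD_coeff, MvPowerSeries.coeff_C, if_neg, mul_zero, map_zero]
  intro hc
  have := DFunLike.congr_fun hc q
  simp [Finsupp.add_apply, Finsupp.single_apply] at this

lemma iterD_W0_C : ∀ {k : ℕ} (v : Fin (k+1) → Fin (2*n)) (j : Fin (2*n)),
    ∃ c : ℂ, iterD yD v (W0 j) = MvPowerSeries.C (σ := Fin (2*n)) (R := ℂ) c := by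
  intro k
  induction k with
  | zero =>
    intro v j
    exact ⟨stdOmega n (v 0) j, by rw [iterD_succ, iterD_zeroth, yD_W0]⟩
  | succ k ih =>
    intro v j
    obtain ⟨c, hc⟩ := ih (fun t => v t.succ) j
    refine ⟨0, ?_⟩
    rw [iterD_succ, hc, yD_C, map_zero]

lemma iterD_W0_zero {k : ℕ} (v : Fin (k+2) → Fin (2*n)) (j : Fin (2*n)) :
    iterD yD v (W0 j) = 0 := by
  obtain ⟨c, hc⟩ := iterD_W0_C (fun t => v t.succ) j
  rw [iterD_succ, hc, yD_C]

lemma mT_zero_k (π : Matrix (Fin (2*n)) (Fin (2*n)) ℂ) (a b : Wc (2*n)) :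
    moyalTerm yD π 0 a b = a * b := by
  unfold moyalTerm
  rw [Finset.univ_unique, Finset.sum_singleton, Finset.sum_singleton]
  simp [iterD_zeroth]

lemma sum_fun1 {M : Type*} [AddCommMonoid M] (g : (Fin 1 → Fin (2*n)) → M) :
    ∑ v : Fin 1 → Fin (2*n), g v = ∑ p : Fin (2*n), g (fun _ => p) := by
  apply Fintype.sum_equiv (Equiv.funUnique (Fin 1) (Fin (2*n)))
  intro v
  congr 1
  funext t
  rw [Subsingleton.elim t 0]
  rfl

lemma mT_one (π : Matrix (Fin (2*n)) (Fin (2*n)) ℂ) (a b : Wc (2*n)) :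
    moyalTerm yD π 1 a b
      = (-Complex.I / 2) • ∑ p : Fin (2*n), ∑ q : Fin (2*n),
          (π p q) • (yD p a * yD q b) := by
  unfold moyalTerm
  rw [pow_one, Nat.factorial_one, Nat.cast_one, div_one]
  rw [sum_fun1]
  congr 1
  apply Finset.sum_congr rfl; intro p _
  rw [sum_fun1]
  apply Finset.sum_congr rfl; intro q _
  simp [iterD_succ, iterD_zeroth]

lemma mT_one_W0_left (j : Fin (2*n)) (c : Wc (2*n)) :
    moyalTerm yD (stdPi n) 1 (W0 j) c = (Complex.I / 2) • yD j c := by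
  rw [mT_one]
  have h1 : ∀ p q : Fin (2*n), (stdPi n p q) • (yD p (W0 j) * yD q c)
      = (stdPi n p q * stdOmega n p j) • yD q c := by
    intro p q
    rw [yD_W0, C_mul_eq_smul, smul_smul]
  simp only [h1]
  rw [Finset.sum_comm]
  have h2 : ∀ q : Fin (2*n),
      (∑ p : Fin (2*n), (stdPi n p q * stdOmega n p j) • yD q c)
        = (if q = j then (-1:ℂ) else 0) • yD q c := by
    intro q
    rw [← Finset.sum_smul, sumPiOmega_col]
  simp only [h2]
  simp only [ite_smul, zero_smul]
  rw [Finset.sum_ite_eq' Finset.univ j (fun q => (-1:ℂ) • yD q c)]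
  rw [if_pos (Finset.mem_univ j)]
  module

lemma mT_one_W0_right (j : Fin (2*n)) (c : Wc (2*n)) :
    moyalTerm yD (stdPi n) 1 c (W0 j) = (-Complex.I / 2) • yD j c := by
  rw [mT_one]
  have h1 : ∀ p q : Fin (2*n), (stdPi n p q) • (yD p c * yD q (W0 j))
      = (stdPi n p q * stdOmega n q j) • yD p c := by
    intro p q
    rw [yD_W0, mul_C_eq_smul, smul_smul]
  simp only [h1]
  have h2 : ∀ p : Fin (2*n),
      (∑ q : Fin (2*n), (stdPi n p q * stdOmega n q j) • yD p c)
        = (if p = j then (1:ℂ) else 0) • yD p c := by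
    intro p
    rw [← Finset.sum_smul, sumPiOmega_row]
  simp only [h2]
  simp only [ite_smul, zero_smul]
  rw [Finset.sum_ite_eq' Finset.univ j (fun p => (1:ℂ) • yD p c)]
  rw [if_pos (Finset.mem_univ j)]
  module

lemma mT_W0_left_hi (k : ℕ) (hk : 2 ≤ k) (π : Matrix (Fin (2*n)) (Fin (2*n)) ℂ)
    (j : Fin (2*n)) (c : Wc (2*n)) :
    moyalTerm yD π k (W0 j) c = 0 := by
  obtain ⟨k', rfl⟩ : ∃ k', k = k' + 2 := ⟨k - 2, by omega⟩
  unfold moyalTerm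
  rw [Finset.sum_eq_zero, smul_zero]
  intro i _
  rw [Finset.sum_eq_zero]
  intro j' _
  rw [iterD_W0_zero, zero_mul, smul_zero]

lemma mT_W0_right_hi (k : ℕ) (hk : 2 ≤ k) (π : Matrix (Fin (2*n)) (Fin (2*n)) ℂ)
    (j : Fin (2*n)) (c : Wc (2*n)) :
    moyalTerm yD π k c (W0 j) = 0 := by
  obtain ⟨k', rfl⟩ : ∃ k', k = k' + 2 := ⟨k - 2, by omega⟩
  unfold moyalTerm
  rw [Finset.sum_eq_zero, smul_zero]
  intro i _
  rw [Finset.sum_eq_zero]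
  intro j' _
  rw [iterD_W0_zero, mul_zero, smul_zero]

end
end StarPaper
namespace StarPaper
noncomputable section
open MvPowerSeries

variable {n : ℕ}

lemma mT_W0_comm (k : ℕ) (j : Fin (2*n)) (c : Wc (2*n)) :
    moyalTerm yD (stdPi n) k (W0 j) c - moyalTerm yD (stdPi n) k c (W0 j)
      = if k = 1 then Complex.I • yD j c else 0 := by
  match k with
  | 0 =>
    rw [mT_zero_k, mT_zero_k, if_neg (by omega), mul_comm (W0 j) c, sub_self]
  | 1 =>
    rw [mT_one_W0_left, mT_one_W0_right, if_pos rfl]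
    module
  | (k+2) =>
    rw [mT_W0_left_hi _ (by omega), mT_W0_right_hi _ (by omega), if_neg (by omega),
      sub_zero]

lemma comm_w' (j : Fin (2*n)) (wS : Wa (2*n)) (h0 : wS 0 = W0 j)
    (hp : ∀ l, l ≠ 0 → wS l = 0) (a : Wa (2*n)) :
    wmul wS a - wmul a wS = Complex.I • hM (yDa j a) := by
  funext m
  simp only [Pi.sub_apply, Pi.smul_apply, wmul, wmulPi, moyalN]
  have e1 : ∀ k ∈ Finset.range (m+1),
      (∑ l ∈ Finset.range (m - k + 1),
        moyalTerm yD (stdPi n) k (wS l) (a (m - k - l)))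
      = moyalTerm yD (stdPi n) k (W0 j) (a (m - k)) := by
    intro k _
    rw [Finset.sum_eq_single 0]
    · rw [h0, Nat.sub_zero]
    · intro l _ hl; rw [hp l hl, mT_zero_left]
    · intro h; exact absurd (Finset.mem_range.mpr (by omega)) h
  have e2 : ∀ k ∈ Finset.range (m+1),
      (∑ l ∈ Finset.range (m - k + 1),
        moyalTerm yD (stdPi n) k (a l) (wS (m - k - l)))
      = moyalTerm yD (stdPi n) k (a (m - k)) (W0 j) := by
    intro k _
    rw [Finset.sum_eq_single (m - k)]
    · rw [Nat.sub_self, h0]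
    · intro l hl hlne
      have hll := Finset.mem_range.mp hl
      rw [hp (m - k - l) (by omega), mT_zero_right]
    · intro h; exact absurd (Finset.mem_range.mpr (by omega)) h
  rw [Finset.sum_congr rfl e1, Finset.sum_congr rfl e2, ← Finset.sum_sub_distrib]
  rw [Finset.sum_congr rfl (fun k _ => mT_W0_comm k j (a (m - k)))]
  rw [Finset.sum_ite_eq' (Finset.range (m+1)) 1 (fun k => Complex.I • yD j (a (m - k)))]
  cases m with
  | zero =>
    rw [if_neg (by simp)]
    simp [hM_zeroth]
  | succ m' =>
    rw [if_pos (Finset.mem_range.mpr (by omega))]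
    simp [hM_succ, yDa]

lemma comm_w (j : Fin (2*n)) (a : Wa (2*n)) :
    wmul (oydxW n {j}) a - wmul a (oydxW n {j}) = Complex.I • hM (yDa j a) := by
  apply comm_w' j
  · rw [oydxW_singleton j]; simp
  · intro l hl; rw [oydxW_singleton j]; simp [hl]

end
end StarPaper
namespace StarPaper
noncomputable section

variable {n : ℕ}

lemma core (j : Fin (2*n)) (R U Xu : Wa (2*n))
    (H : -yDa j U + Xu + Complex.I • hInv (wmul R U - wmul U R) = 0) :
    -yDa j (PW U) + PW Xu + Complex.I • hInv (wmul R (PW U) - wmul (PW U) R)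
      = Complex.I • hInv
          (wmul (-(EulWa R - Complex.I • hM (hD R) + Complex.I • R
              + (Complex.I/2) • oydxW n {j})) U
           - wmul U (-(EulWa R - Complex.I • hM (hD R) + Complex.I • R
              + (Complex.I/2) • oydxW n {j}))) := by
  have hw : hInv (wmul (oydxW n {j}) U)
      = Complex.I • yDa j U + hInv (wmul U (oydxW n {j})) := by
    have h := congrArg hInv (comm_w j U)
    rw [hInv_sub, hInv_smul, hInv_hM] at h
    rw [← h]; module
  have HP := congrArg PW H
  rw [PW_add, PW_add, PW_neg, PW_yDa, PW_smul, PW_hInv, PW_sub, P_wmul, P_wmul,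
    PW_zero] at HP
  rw [show PW R = -Complex.I • hM (hD R) + EulWa R from PW_split R] at HP
  simp only [wmul_add_left, wmul_smul_left, wmul_add_right, wmul_smul_right,
    hInv_add, hInv_sub, hInv_smul] at HP
  simp only [wmul_neg_left, wmul_neg_right, wmul_add_left, wmul_add_right,
    wmul_sub_left, wmul_sub_right, wmul_smul_left, wmul_smul_right,
    hInv_add, hInv_sub, hInv_neg, hInv_smul, hw]
  have hI2 : (Complex.I * Complex.I) • yDa j U = (-1 : ℂ) • yDa j U := by
    rw [Complex.I_mul_I]
  linear_combination (norm := module) HP + (Complex.I/2) • hI2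

end
end StarPaper
namespace StarPaper
noncomputable section

variable {n : ℕ}

lemma yDa_zero (i : Fin (2*n)) : yDa i (0 : Wa (2*n)) = 0 := by
  funext m; exact yD_zero i

lemma EulWa_zero : EulWa (0 : Wa (2*n)) = 0 := by
  funext m; exact EulW_zero

lemma hD_zero : hD (0 : Wa (2*n)) = 0 := by
  funext m; simp [hD]

lemma hM_zero : hM (0 : Wa (2*n)) = 0 := by
  funext m; cases m <;> rfl

lemma xD_zero (i : Fin (2*n)) (x : Pt n) :
    xD i (fun _ : Pt n => (0 : Wa (2*n))) x = 0 := by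
  funext m; apply Wc.exten; intro β
  rw [show (0 : Wa (2*n)) m = 0 from rfl, map_zero]
  show fderiv ℝ (fun x' : Pt n =>
      MvPowerSeries.coeff (R := ℂ) β (((fun _ : Pt n => (0 : Wa (2*n))) x') m)) x (Pi.single i 1) = 0
  have hz : (fun x' : Pt n =>
      MvPowerSeries.coeff (R := ℂ) β (((fun _ : Pt n => (0 : Wa (2*n))) x') m)) = fun _ => (0:ℂ) := by
    funext x'; exact map_zero _
  rw [hz, fderiv_const_apply]
  simp

lemma insSign_singleton (j : Fin (2*n)) : insSign ({j} : Finset (Fin (2*n))) j = 1 := by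
  rw [insSign, Finset.filter_singleton, if_neg (lt_irrefl j), Finset.card_empty, pow_zero]

lemma shuffleSign_empty_left (S2 : Finset (Fin (2*n))) : shuffleSign ∅ S2 = 1 := by
  rw [shuffleSign, Finset.empty_product, Finset.filter_empty, Finset.card_empty, pow_zero]

lemma shuffleSign_empty_right (S1 : Finset (Fin (2*n))) : shuffleSign S1 ∅ = 1 := by
  rw [shuffleSign, Finset.product_empty, Finset.filter_empty, Finset.card_empty, pow_zero]

lemma deltaW_singleton (a : WF n) (j : Fin (2*n)) (x : Pt n) :
    deltaW a {j} x = yDa j (a ∅ x) := by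
  simp only [deltaW]
  rw [Finset.sum_singleton, Finset.erase_singleton, insSign_singleton, one_smul]

lemma extD_singleton (a : WF n) (j : Fin (2*n)) (x : Pt n) :
    extD a {j} x = xD j (a ∅) x := by
  simp only [extD]
  rw [Finset.sum_singleton, Finset.erase_singleton, insSign_singleton, one_smul]

lemma wMulF_singleton (a b : WF n) (j : Fin (2*n)) (x : Pt n) :
    wMulF a b {j} x = wmul (a ∅ x) (b {j} x) + wmul (a {j} x) (b ∅ x) := by
  show (∑ S1 ∈ ({j} : Finset (Fin (2*n))).powerset,
      shuffleSign S1 ({j} \ S1) • wmul (a S1 x) (b ({j} \ S1) x)) = _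
  rw [show ({j} : Finset (Fin (2*n))).powerset = {∅, {j}} from by
    ext s; simp [Finset.subset_singleton_iff]]
  rw [Finset.sum_insert (by
    intro hmem
    rw [Finset.mem_singleton] at hmem
    exact (Finset.singleton_ne_empty j) hmem.symm), Finset.sum_singleton, Finset.sdiff_empty,
    Finset.sdiff_self, shuffleSign_empty_left, shuffleSign_empty_right, one_smul, one_smul]

lemma comm1_singleton (c a : WF n) (j : Fin (2*n)) (x : Pt n) :
    comm1 c a {j} x = wMulF c a {j} x - wMulF a c {j} x := by
  show wMulF c a {j} x
      - (-1:ℂ)^(({j} : Finset (Fin (2*n))).card - 1) • wMulF a c {j} x = _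
  rw [Finset.card_singleton]
  norm_num

lemma oydxW_ne_one (S : Finset (Fin (2*n))) (h : S.card ≠ 1) : oydxW n S = 0 := by
  funext m
  simp only [oydxW]
  by_cases hm : m = 0
  · rw [if_pos hm, Finset.sum_eq_zero]
    · rfl
    · intro j' _
      rw [if_neg (fun hS => h (by rw [hS]; simp))]
  · rw [if_neg hm]; rfl

lemma K0_zero (r : WF n) (S : Finset (Fin (2*n))) (x : Pt n)
    (h1 : r S = 0) (hS : S.card ≠ 1) : K0 r S x = 0 := by
  have h1x : r S x = 0 := by rw [h1]; rfl
  show -(EulWa (r S x) - Complex.I • hM (hD (r S x)) + Complex.I • r S x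
      + (Complex.I/2) • oydxW n S) = 0
  rw [h1x, oydxW_ne_one S hS, EulWa_zero, hD_zero, hM_zero]
  simp

lemma wMulF_zero_ca (c a : WF n) (S : Finset (Fin (2*n))) (x : Pt n) (hS : S.card ≠ 1)
    (hc : ∀ T, T.card ≠ 1 → c T x = 0) (ha : ∀ T, T ≠ ∅ → a T x = 0) :
    wMulF c a S x = 0 := by
  show (∑ S1 ∈ S.powerset, shuffleSign S1 (S \ S1) • wmul (c S1 x) (a (S \ S1) x)) = 0
  apply Finset.sum_eq_zero
  intro S1 hmem
  have hsub : S1 ⊆ S := Finset.mem_powerset.mp hmem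
  by_cases h1 : S1.card = 1
  · have hdiff : S \ S1 ≠ ∅ := by
      intro hcon
      have : S ⊆ S1 := Finset.sdiff_eq_empty_iff_subset.mp hcon
      have : S1 = S := Finset.Subset.antisymm hsub this
      exact hS (by rw [← this, h1])
    rw [ha _ hdiff, wmul_zero_right, smul_zero]
  · rw [hc _ h1, wmul_zero_left, smul_zero]

lemma wMulF_zero_ac (c a : WF n) (S : Finset (Fin (2*n))) (x : Pt n) (hS : S.card ≠ 1)
    (hc : ∀ T, T.card ≠ 1 → c T x = 0) (ha : ∀ T, T ≠ ∅ → a T x = 0) :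
    wMulF a c S x = 0 := by
  show (∑ S1 ∈ S.powerset, shuffleSign S1 (S \ S1) • wmul (a S1 x) (c (S \ S1) x)) = 0
  apply Finset.sum_eq_zero
  intro S1 hmem
  by_cases h1 : S1 = ∅
  · subst h1
    rw [Finset.sdiff_empty, hc _ hS, wmul_zero_right, smul_zero]
  · rw [ha _ h1, wmul_zero_left, smul_zero]

lemma xD_PW {u : WF n} (hus : WF.Smooth u) (j : Fin (2*n)) (x : Pt n) :
    xD j (rhoW u ∅) x = PW (xD j (u ∅) x) := by
  funext m
  apply Wc.exten
  intro β
  have hdif : DifferentiableAt ℝ (fun x' => MvPowerSeries.coeff (R := ℂ) β (u ∅ x' m)) x :=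
    ((hus ∅ m β).differentiable (by simp)).differentiableAt
  have hfun : (fun x' => MvPowerSeries.coeff (R := ℂ) β (rhoW u ∅ x' m))
      = fun x' => (-Complex.I * (m:ℂ) + eig β) * MvPowerSeries.coeff (R := ℂ) β (u ∅ x' m) := by
    funext x'
    show MvPowerSeries.coeff (R := ℂ) β
        ((-Complex.I * (m:ℂ)) • u ∅ x' m + EulW (u ∅ x' m)) = _
    rw [map_add, MvPowerSeries.coeff_smul, EulW_coeff]
    ring
  have L : MvPowerSeries.coeff (R := ℂ) β (xD j (rhoW u ∅) x m)
      = fderiv ℝ (fun x' => MvPowerSeries.coeff (R := ℂ) β (rhoW u ∅ x' m)) x (Pi.single j 1) := rfl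
  have R : MvPowerSeries.coeff (R := ℂ) β (PW (xD j (u ∅) x) m)
      = (-Complex.I * (m:ℂ) + eig β) *
          fderiv ℝ (fun x' => MvPowerSeries.coeff (R := ℂ) β (u ∅ x' m)) x (Pi.single j 1) := by
    show MvPowerSeries.coeff (R := ℂ) β
        ((-Complex.I * (m:ℂ)) • xD j (u ∅) x m + EulW (xD j (u ∅) x m)) = _
    rw [map_add, MvPowerSeries.coeff_smul, EulW_coeff]
    have hco : MvPowerSeries.coeff (R := ℂ) β (xD j (u ∅) x m)
        = fderiv ℝ (fun x' => MvPowerSeries.coeff (R := ℂ) β (u ∅ x' m)) x (Pi.single j 1) := rfl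
    rw [hco]; ring
  rw [L, R, hfun, fderiv_const_mul hdif]
  simp

end
end StarPaper
namespace StarPaper

/-- Let `r` be a `W`-valued 1-form, `D = −δ + d + (i/ℏ)[r,·]`, and
`ũ` a flat `W`-valued 0-form.  With `ρ(ũ) = (ℏ/i)∂ũ/∂ℏ + Eũ` and
`K₀ = −(Er − iℏ ∂r/∂ℏ + i r + (i/2) Σ ω_{ij} y^i dx^j)`:
`D(ρ(ũ)) = (i/ℏ)[K₀, ũ]`. -/
theorem D_rho_eq_K0_commutator (n : ℕ) (r u : WF n)
    (hr : isForm 1 r) (hrs : WF.Smooth r)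
    (hu : isForm 0 u) (hus : WF.Smooth u) (hflat : fedD r u = 0) :
    fedD r (rhoW u) = fun S x => Complex.I • hInv (comm1 (K0 r) u S x) := by
  funext S x
  simp only [fedD]
  by_cases hS1 : S.card = 1
  · obtain ⟨j, rfl⟩ := Finset.card_eq_one.mp hS1
    have hRe : r ∅ x = 0 := by rw [hr ∅ (by simp)]; rfl
    have hUj : u {j} x = 0 := by rw [hu {j} (by simp)]; rfl
    have hKe : K0 r ∅ x = 0 := K0_zero r ∅ x (hr ∅ (by simp)) (by simp)
    have H0 : -deltaW u {j} x + extD u {j} x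
        + Complex.I • hInv (comm1 r u {j} x) = 0 := by
      have h := congrFun (congrFun hflat {j}) x
      exact h
    rw [deltaW_singleton, extD_singleton, comm1_singleton, wMulF_singleton,
      wMulF_singleton, hRe, hUj] at H0
    simp only [wmul_zero_left, wmul_zero_right, zero_add, add_zero] at H0
    rw [deltaW_singleton, extD_singleton, comm1_singleton, comm1_singleton,
      wMulF_singleton, wMulF_singleton, wMulF_singleton, wMulF_singleton,
      hRe, hUj, hKe, xD_PW hus j x]
    simp only [rhoW_eq, hUj, PW_zero, wmul_zero_left, wmul_zero_right,
      zero_add, add_zero]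
    exact core j (r {j} x) (u ∅ x) (xD j (u ∅) x) H0
  · have hcz : ∀ T : Finset (Fin (2*n)), T ≠ ∅ → u T x = 0 := by
      intro T hT
      rw [hu T (fun hc => hT (Finset.card_eq_zero.mp hc))]; rfl
    have hrz : ∀ T : Finset (Fin (2*n)), T.card ≠ 1 → r T x = 0 := fun T hT => by
      rw [hr T hT]; rfl
    have hrho : ∀ T : Finset (Fin (2*n)), T ≠ ∅ → rhoW u T x = 0 := by
      intro T hT
      rw [rhoW_eq, hcz T hT, PW_zero]
    have h1 : deltaW (rhoW u) S x = 0 := by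
      simp only [deltaW]
      apply Finset.sum_eq_zero
      intro i hi
      have hpos : 0 < S.card := Finset.card_pos.mpr ⟨i, hi⟩
      have hne : S.erase i ≠ ∅ := by
        intro hc
        have h3 := Finset.card_erase_of_mem hi
        rw [hc, Finset.card_empty] at h3
        omega
      rw [hrho _ hne, yDa_zero, smul_zero]
    have h2 : extD (rhoW u) S x = 0 := by
      simp only [extD]
      apply Finset.sum_eq_zero
      intro i hi
      have hpos : 0 < S.card := Finset.card_pos.mpr ⟨i, hi⟩
      have hne : S.erase i ≠ ∅ := by
        intro hc
        have h3 := Finset.card_erase_of_mem hi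
        rw [hc, Finset.card_empty] at h3
        omega
      have hfun : rhoW u (S.erase i) = fun _ : Pt n => (0 : Wa (2*n)) := by
        funext x'
        rw [rhoW_eq, show u (S.erase i) x' = 0 from by
          rw [hu _ (fun hc => hne (Finset.card_eq_zero.mp hc))]; rfl, PW_zero]
      rw [hfun, xD_zero, smul_zero]
    have h3 : comm1 r (rhoW u) S x = 0 := by
      simp only [comm1]
      rw [wMulF_zero_ca r (rhoW u) S x hS1 hrz hrho,
        wMulF_zero_ac r (rhoW u) S x hS1 hrz hrho, smul_zero, sub_zero]
    have h4 : comm1 (K0 r) u S x = 0 := by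
      simp only [comm1]
      rw [wMulF_zero_ca (K0 r) u S x hS1 (fun T hT => K0_zero r T x (hr T hT) hT) hcz,
        wMulF_zero_ac (K0 r) u S x hS1 (fun T hT => K0_zero r T x (hr T hT) hT) hcz,
        smul_zero, sub_zero]
    rw [h1, h2, h3, h4, hInv_zero]
    simp

end StarPaper
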